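/- In the affine chart, with h(x,y) = (x/(x−1), (x−y)/(x−1)) and σ(x,y) = (1/x, 1/y), the composition (h ∘ σ)³ is the identity as a birational map of ℂ². -/

import Mathlib

/-- Gizatullin's relation in an affine chart: with h(x,y) = (x/(x−1), (x−y)/(x−1))
and σ(x,y) = (1/x, 1/y), the composition (h ∘ σ)³ is the identity birational map
of ℂ² (equality wherever all intermediate denominators are nonzero). -/
theorem gizatullin_relation_affine :
    ∀ x y : ℂ,
      ∀ p1 : ℂ × ℂ, p1 = (1 / x, 1 / y) →
      ∀ p2 : ℂ × ℂ, p2 = (p1.1 / (p1.1 - 1), (p1.1 - p1.2) / (p1.1 - 1)) →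
      ∀ p3 : ℂ × ℂ, p3 = (1 / p2.1, 1 / p2.2) →
      ∀ p4 : ℂ × ℂ, p4 = (p3.1 / (p3.1 - 1), (p3.1 - p3.2) / (p3.1 - 1)) →
      ∀ p5 : ℂ × ℂ, p5 = (1 / p4.1, 1 / p4.2) →
      ∀ p6 : ℂ × ℂ, p6 = (p5.1 / (p5.1 - 1), (p5.1 - p5.2) / (p5.1 - 1)) →
      x ≠ 0 → y ≠ 0 → p1.1 ≠ 1 → p2.1 ≠ 0 → p2.2 ≠ 0 → p3.1 ≠ 1 →
      p4.1 ≠ 0 → p4.2 ≠ 0 → p5.1 ≠ 1 →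
      p6 = (x, y) := by
  intro x y p1 h1 p2 h2 p3 h3 p4 h4 p5 h5 p6 h6 hx hy ha hb hc hd he hf hg
  have ha' : p1.1 - 1 ≠ 0 := sub_ne_zero.mpr ha
  have hd' : p3.1 - 1 ≠ 0 := sub_ne_zero.mpr hd
  have hg' : p5.1 - 1 ≠ 0 := sub_ne_zero.mpr hg
  have hxe : x ≠ 1 := fun h => ha (by rw [h1, h]; simp)
  have hx1' : (1:ℂ) - x ≠ 0 := sub_ne_zero.mpr (Ne.symm hxe)
  have hnum : p1.1 - p1.2 ≠ 0 := fun h => hc (by rw [h2]; simp [h])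
  have hyx : y - x ≠ 0 := by
    intro h
    apply hnum
    rw [h1]
    have hxy' : x = y := by linear_combination -h
    simp [hxy']
  have e2 : p2 = (1/(1-x), (y - x)/((1-x)*y)) := by
    rw [h2, h1]
    simp only [Prod.mk.injEq]
    constructor <;> (field_simp; try ring)
  have e3 : p3 = (1 - x, ((1-x)*y)/(y - x)) := by
    rw [h3, e2]
    simp only [Prod.mk.injEq]
    constructor <;> rw [one_div_div]
    rw [div_one]
  have e4 : p4 = ((x-1)/x, (1-x)/(y-x)) := by
    rw [h4, e3]
    simp only [Prod.mk.injEq]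
    constructor
    · rw [show (1:ℂ)-x-1 = -x by ring, div_neg, ← neg_div, neg_sub]
    · rw [show (1:ℂ)-x-1 = -x by ring,
        div_eq_div_iff (neg_ne_zero.mpr hx) hyx]
      field_simp
      ring
  have hx2 : x - 1 ≠ 0 := sub_ne_zero.mpr hxe
  have e5 : p5 = (x/(x-1), (y-x)/(1-x)) := by
    rw [h5, e4]
    simp only [Prod.mk.injEq]
    constructor <;> rw [one_div_div]
  rw [h6, e5]
  have h1ne : x/(x-1) - 1 = 1/(x-1) := by field_simp; ring
  simp only [Prod.mk.injEq, h1ne]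
  constructor
  · field_simp
  · field_simp; ring
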